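/- For the lattice pyramid pyr(C) over the 3-dimensional unit cube C = [0,1]³, one has c₁(pyr(C)) = -1. In particular, c₁ can be negative for (non-smooth) lattice polytopes. -/

import Mathlib

open Filter
open scoped BigOperators

noncomputable section

/-- Ambient space `ℝ^d`. -/
abbrev V (d : ℕ) := Fin d → ℝ

attribute [-simp] Fin.reduceLast

/-- A point of `ℝ^d` is a lattice point if all coordinates are integers. -/
def IsLatticePoint {d : ℕ} (x : V d) : Prop := ∀ i, ∃ z : ℤ, x i = (z : ℝ)

/-- A lattice polytope is the convex hull of finitely many lattice points. -/
def IsLatticePolytope {d : ℕ} (P : Set (V d)) : Prop :=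
  ∃ S : Finset (V d), (∀ v ∈ S, IsLatticePoint v) ∧ P = convexHull ℝ (S : Set (V d))

/-- The face of `P` in direction of the linear functional `ℓ`. -/
def faceSet {d : ℕ} (P : Set (V d)) (ℓ : V d →ₗ[ℝ] ℝ) : Set (V d) :=
  {x ∈ P | ∀ y ∈ P, ℓ y ≤ ℓ x}

/-- `F` is a (nonempty, exposed) face of `P`. -/
def IsFaceOf {d : ℕ} (P F : Set (V d)) : Prop :=
  F.Nonempty ∧ ∃ ℓ : V d →ₗ[ℝ] ℝ, F = faceSet P ℓ

/-- `v` is a vertex of `P`. -/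
def IsVertexOf {d : ℕ} (P : Set (V d)) (v : V d) : Prop := IsFaceOf P {v}

/-- The (affine) dimension of a subset of `ℝ^d`. -/
def pdim {d : ℕ} (F : Set (V d)) : ℕ := Module.finrank ℝ (vectorSpan ℝ F)

/-- Number of lattice points in the `t`-fold dilate of `F` (the Ehrhart counting
function; for a lattice polytope it agrees with the Ehrhart polynomial). -/
def ehr {d : ℕ} (F : Set (V d)) (t : ℕ) : ℕ :=
   {x ∈ (fun y => (t : ℝ) • y) '' F | IsLatticePoint x}.ncard

/-- The normalized lattice volume of a lattice polytope `F` with respect to the lattice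
`ℤ^d ∩ aff F`: it is `(dim F)!` times the leading coefficient of the Ehrhart polynomial,
recovered here as a limit. -/
def lvol {d : ℕ} (F : Set (V d)) : ℝ :=
  limUnder atTop (fun t : ℕ => ((pdim F).factorial * ehr F t : ℝ) / (t : ℝ) ^ (pdim F))

/-- The invariant `c_t(P) = ∑_{k=0}^{dim P} (-1)^{dim P-k} ((k+t)!/k!) ∑_{F face, dim F = k} lvol F`. -/
def cInv {d : ℕ} (P : Set (V d)) (t : ℕ) : ℝ :=
  ∑ k ∈ Finset.range (pdim P + 1),
    (-1 : ℝ) ^ (pdim P - k) * ((k + t).factorial / k.factorial : ℝ) *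
      ∑ᶠ F ∈ {F : Set (V d) | IsFaceOf P F ∧ pdim F = k}, lvol F

/-- `f(P,t) = ∑_{k=0}^{d} ∑_{F face, dim F = k} (-1)^{d-k} (k+1)! ehr(F,t) t^{d-k}`. -/
def fpoly {d : ℕ} (P : Set (V d)) (t : ℕ) : ℝ :=
  ∑ k ∈ Finset.range (pdim P + 1),
    (-1 : ℝ) ^ (pdim P - k) * (k + 1).factorial *
      (∑ᶠ F ∈ {F : Set (V d) | IsFaceOf P F ∧ pdim F = k}, (ehr F t : ℝ)) *
      (t : ℝ) ^ (pdim P - k)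

/-- The lattice pyramid `conv(P × {0} ∪ {(w,1)})` over `P` with apex over the point `w`. -/
def pyrPt {d : ℕ} (P : Set (V d)) (w : V d) : Set (V (d + 1)) :=
  convexHull ℝ ((fun x => Fin.snoc x (0 : ℝ)) '' P ∪ {Fin.snoc w (1 : ℝ)})

/-- `w` embedded into `ℝ^{d+r}` by appending `r` zero coordinates. -/
def liftVec {d : ℕ} (w : V d) : (r : ℕ) → V (d + r)
  | 0 => w
  | r + 1 => Fin.snoc (liftVec w r) 0

/-- The `r`-fold lattice pyramid over `P`, taking apexes over (the lift of) the vertex `w`. -/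
def pyrIter {d : ℕ} (P : Set (V d)) (w : V d) : (r : ℕ) → Set (V (d + r))
  | 0 => P
  | r + 1 => pyrPt (pyrIter P w r) (liftVec w r)

/-- The unit cube `[0,1]^d`. -/
def unitCube (d : ℕ) : Set (V d) := Set.Icc (0 : V d) 1

open Topology

namespace C1Aux

def cval (b : Bool) : ℝ := if b then 1 else 0

lemma cval_nonneg (b : Bool) : 0 ≤ cval b := by cases b <;> simp [cval]
lemma cval_le_one (b : Bool) : cval b ≤ 1 := by cases b <;> simp [cval]

abbrev Sig := Fin 3 → Option Bool

def fc (σ : Sig) : ℕ := (Finset.univ.filter fun i => σ i = none).card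

abbrev last4 : Fin 4 := Fin.last 3

def CFs (σ : Sig) (c : ℝ) : Set (V 4) :=
  {x | x (Fin.last 3) = 0 ∧ ∀ i : Fin 3,
    (∀ b, σ i = some b → x i.castSucc = c * cval b) ∧
    (σ i = none → x i.castSucc ∈ Set.Icc (0:ℝ) c)}

def PFs (σ : Sig) (c : ℝ) : Set (V 4) :=
  {x | x (Fin.last 3) ∈ Set.Icc (0:ℝ) c ∧ ∀ i : Fin 3,
    (∀ b, σ i = some b → x i.castSucc = cval b * (c - x (Fin.last 3))) ∧
    (σ i = none → x i.castSucc ∈ Set.Icc (0:ℝ) (c - x (Fin.last 3)))}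

def CF (σ : Sig) : Set (V 4) := CFs σ 1
def PF (σ : Sig) : Set (V 4) := PFs σ 1

def apexPt : V 4 := Fin.snoc (0 : V 3) 1

def vtx (τ : Fin 3 → Bool) : V 4 := Fin.snoc (fun i => cval (τ i)) 0

def compat (σ : Sig) (τ : Fin 3 → Bool) : Prop := ∀ i, ∀ b, σ i = some b → τ i = b

instance (σ : Sig) (τ : Fin 3 → Bool) : Decidable (compat σ τ) := by
  unfold compat; infer_instance

def VS (σ : Sig) : Finset (V 4) := (Finset.univ.filter (fun τ => compat σ τ)).image vtx

def τσ (σ : Sig) : Fin 3 → Bool := fun i => (σ i).getD false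

lemma compat_τσ (σ : Sig) : compat σ (τσ σ) := by
  intro i b h; simp [τσ, h]

lemma vtx_last (τ) : vtx τ (Fin.last 3) = 0 := by simp [vtx]
lemma vtx_castSucc (τ) (i : Fin 3) : vtx τ i.castSucc = cval (τ i) := by simp [vtx]
lemma apex_last : apexPt (Fin.last 3) = 1 := by simp [apexPt]
lemma apex_castSucc (i : Fin 3) : apexPt i.castSucc = 0 := by
  simp [apexPt]

lemma vtx_mem_CF {σ τ} (h : compat σ τ) : vtx τ ∈ CF σ := by
  refine ⟨vtx_last τ, fun i => ⟨fun b hb => ?_, fun hn => ?_⟩⟩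
  · rw [vtx_castSucc, h i b hb, one_mul]
  · rw [vtx_castSucc]; exact ⟨cval_nonneg _, cval_le_one _⟩

lemma vtx_injective : Function.Injective vtx := by
  intro τ τ' h
  funext i
  have := congrFun h i.castSucc
  rw [vtx_castSucc, vtx_castSucc] at this
  cases hb : τ i <;> cases hb' : τ' i <;>
    simp [hb, hb', cval] at this ⊢

/-- the product description of the vertex set -/
def T0 (σ : Sig) : Fin 4 → Set ℝ :=
  Fin.snoc (fun i => match σ i with
    | none => ({0, 1} : Set ℝ)
    | some b => {cval b}) ({0} : Set ℝ)

lemma coe_VS (σ : Sig) : (VS σ : Set (V 4)) = Set.univ.pi (T0 σ) := by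
  ext x
  simp only [VS, Finset.coe_image, Finset.coe_filter, Set.mem_image, Set.mem_setOf_eq,
    Finset.mem_univ, true_and, Set.mem_pi, Set.mem_univ, forall_true_left]
  constructor
  · rintro ⟨τ, hc, rfl⟩ j
    refine Fin.lastCases ?_ (fun i => ?_) j
    · rw [vtx_last]; simp [T0]
    · rw [vtx_castSucc]
      rcases hσ : σ i with _ | b
      · simp only [T0, Fin.snoc_castSucc, hσ]
        cases τ i <;> simp [cval]
      · simp only [T0, Fin.snoc_castSucc, hσ]
        rw [hc i b hσ]
        simp
  · intro hx
    refine ⟨fun i => decide (x i.castSucc = 1), fun i b hb => ?_, ?_⟩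
    · have := hx i.castSucc
      simp only [T0, Fin.snoc_castSucc, hb] at this
      rcases b <;> simp only [cval, if_true, if_false, Set.mem_singleton_iff] at this <;>
        simp [this]
    · funext j
      refine Fin.lastCases ?_ (fun i => ?_) j
      · have := hx (Fin.last 3)
        simp only [T0] at this
        rw [Fin.snoc_last] at this
        simp only [Set.mem_singleton_iff] at this
        rw [vtx_last]
        exact this.symm
      · have := hx i.castSucc
        rw [vtx_castSucc]
        rcases hσ : σ i with _ | b <;> simp only [T0, Fin.snoc_castSucc, hσ] at this
        · simp only [Set.mem_insert_iff, Set.mem_singleton_iff] at this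
          rcases this with h | h
          · have hne : x i.castSucc ≠ 1 := by rw [h]; norm_num
            rw [decide_eq_false hne, h]; simp [cval]
          · rw [decide_eq_true h, h]; simp [cval]
        · simp only [Set.mem_singleton_iff] at this
          cases b
          · have hne : x i.castSucc ≠ 1 := by rw [this]; simp [cval]
            rw [decide_eq_false hne, this]
          · rw [decide_eq_true (by rw [this]; simp [cval] : x i.castSucc = 1), this]

lemma CF_eq_hull (σ : Sig) : CF σ = convexHull ℝ (VS σ : Set (V 4)) := by
  rw [coe_VS, convexHull_pi]
  ext x
  simp only [Set.mem_pi, Set.mem_univ, forall_true_left]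
  constructor
  · rintro ⟨hl, hi⟩ j
    refine Fin.lastCases ?_ (fun i => ?_) j
    · simp only [T0]; rw [Fin.snoc_last, convexHull_singleton]
      simpa using hl
    · rcases hσ : σ i with _ | b <;> simp only [T0, Fin.snoc_castSucc, hσ]
      · rw [convexHull_pair, segment_eq_Icc (by norm_num : (0:ℝ) ≤ 1)]
        exact (hi i).2 hσ
      · rw [convexHull_singleton]
        have := (hi i).1 b hσ
        rw [one_mul] at this
        simpa using this
  · intro hx
    constructor
    · have := hx (Fin.last 3)
      simp only [T0] at this
      rw [Fin.snoc_last, convexHull_singleton] at this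
      simpa using this
    · intro i
      have := hx i.castSucc
      constructor
      · intro b hb
        simp only [T0, Fin.snoc_castSucc, hb, convexHull_singleton] at this
        rw [one_mul]; simpa using this
      · intro hn
        simp only [T0, Fin.snoc_castSucc, hn] at this
        rw [convexHull_pair, segment_eq_Icc (by norm_num : (0:ℝ) ≤ 1)] at this
        exact this

lemma VS_nonempty (σ : Sig) : ((VS σ : Set (V 4))).Nonempty := by
  refine ⟨vtx (τσ σ), ?_⟩
  simp only [VS, Finset.coe_image, Set.mem_image, Finset.mem_coe, Finset.mem_filter,
    Finset.mem_univ, true_and]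
  exact ⟨τσ σ, compat_τσ σ, rfl⟩

lemma vtx_mem_VS {σ τ} (h : compat σ τ) : vtx τ ∈ VS σ := by
  simp only [VS, Finset.mem_image, Finset.mem_filter, Finset.mem_univ, true_and]
  exact ⟨τ, h, rfl⟩

lemma vtx_mem_PF {σ τ} (h : compat σ τ) : vtx τ ∈ PF σ := by
  refine ⟨?_, fun i => ⟨fun b hb => ?_, fun hn => ?_⟩⟩
  · rw [vtx_last]; exact ⟨le_refl 0, zero_le_one⟩
  · rw [vtx_castSucc, h i b hb, vtx_last]; ring
  · rw [vtx_castSucc, vtx_last]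
    simpa using ⟨cval_nonneg _, cval_le_one _⟩

lemma apex_mem_PF (σ : Sig) : apexPt ∈ PF σ := by
  refine ⟨?_, fun i => ⟨fun b hb => ?_, fun hn => ?_⟩⟩
  · rw [apex_last]; exact ⟨zero_le_one, le_refl 1⟩
  · rw [apex_castSucc, apex_last]; ring
  · rw [apex_castSucc, apex_last]; simp

lemma PF_eq_hull (σ : Sig) : PF σ = convexHull ℝ (insert apexPt (VS σ : Set (V 4))) := by
  rw [convexHull_insert (VS_nonempty σ), convexJoin_singleton_left, ← CF_eq_hull]
  ext x
  simp only [Set.mem_iUnion₂]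
  constructor
  · rintro ⟨⟨hs0, hs1⟩, hi⟩
    set s := x (Fin.last 3) with hsdef
    by_cases hs : s = 1
    · refine ⟨vtx (τσ σ), vtx_mem_CF (compat_τσ σ), ?_⟩
      have hxa : x = apexPt := by
        funext j
        refine Fin.lastCases ?_ (fun i => ?_) j
        · rw [apex_last, ← hsdef, hs]
        · rw [apex_castSucc]
          rcases hσ : σ i with _ | b
          · have := (hi i).2 hσ
            rw [hs] at this
            simp only [sub_self] at this
            exact le_antisymm this.2 this.1
          · have := (hi i).1 b hσ
            rw [hs] at this
            rw [this]; ring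
      rw [hxa]
      exact left_mem_segment ℝ _ _
    · have h1s : (0:ℝ) < 1 - s := by
        rcases lt_or_eq_of_le hs1 with h | h
        · linarith
        · exact absurd h hs
      refine ⟨Fin.snoc (fun i => x i.castSucc / (1 - s)) 0, ?_, ?_⟩
      · refine ⟨by simp, fun i => ⟨fun b hb => ?_, fun hn => ?_⟩⟩
        · rw [Fin.snoc_castSucc]
          have := (hi i).1 b hb
          rw [this, one_mul]
          field_simp
        · rw [Fin.snoc_castSucc]
          have := (hi i).2 hn
          exact ⟨div_nonneg this.1 h1s.le, by rw [div_le_one h1s]; linarith [this.2]⟩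
      · refine ⟨s, 1 - s, hs0, h1s.le, by ring, ?_⟩
        funext j
        refine Fin.lastCases ?_ (fun i => ?_) j
        · simp only [Pi.add_apply, Pi.smul_apply, Fin.snoc_last, apex_last, smul_eq_mul]
          rw [← hsdef]; ring
        · simp only [Pi.add_apply, Pi.smul_apply, Fin.snoc_castSucc, apex_castSucc, smul_eq_mul]
          field_simp
          ring
  · rintro ⟨y, ⟨hyl, hyi⟩, a, b, ha, hb, hab, rfl⟩
    have hlast : (a • apexPt + b • y) (Fin.last 3) = a := by
      simp only [Pi.add_apply, Pi.smul_apply, apex_last, smul_eq_mul, hyl, mul_zero, add_zero,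
        mul_one]
    refine ⟨?_, fun i => ⟨fun bb hbb => ?_, fun hn => ?_⟩⟩
    · rw [hlast]; exact ⟨ha, by linarith⟩
    · have hy := (hyi i).1 bb hbb
      have hba : (1:ℝ) - a = b := by linarith
      simp only [Pi.add_apply, Pi.smul_apply, apex_castSucc, smul_eq_mul, mul_zero, zero_add,
        hlast, hba, hy]
      ring
    · have := (hyi i).2 hn
      simp only [Pi.add_apply, Pi.smul_apply, apex_castSucc, smul_eq_mul, mul_zero, zero_add,
        hlast]
      constructor
      · exact mul_nonneg hb this.1
      · calc b * y i.castSucc ≤ b * 1 := by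
              exact mul_le_mul_of_nonneg_left this.2 hb
          _ = 1 - a := by linarith


def snocZeroMap : V 3 →ₗ[ℝ] V 4 where
  toFun x := Fin.snoc x 0
  map_add' x y := by
    funext j
    refine Fin.lastCases ?_ (fun i => ?_) j <;>
      simp [Fin.snoc_last, Fin.snoc_castSucc]
  map_smul' c x := by
    funext j
    refine Fin.lastCases ?_ (fun i => ?_) j <;>
      simp [Fin.snoc_last, Fin.snoc_castSucc]

def cubeVerts : Set (V 3) := Set.univ.pi (fun _ => ({0, 1} : Set ℝ))

def cnone : Sig := fun _ => none

lemma unitCube_eq_hull : unitCube 3 = convexHull ℝ cubeVerts := by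
  rw [cubeVerts, convexHull_pi]
  ext x
  simp only [unitCube, Set.mem_Icc, Set.mem_pi, Set.mem_univ, forall_true_left,
    convexHull_pair, segment_eq_Icc (by norm_num : (0:ℝ) ≤ 1), Pi.le_def, Set.mem_Icc]
  constructor
  · rintro ⟨h0, h1⟩ i; exact ⟨h0 i, h1 i⟩
  · intro h; exact ⟨fun i => (h i).1, fun i => (h i).2⟩

lemma image_cubeVerts : snocZeroMap '' cubeVerts = (VS cnone : Set (V 4)) := by
  rw [coe_VS]
  ext z
  simp only [Set.mem_image, Set.mem_pi, Set.mem_univ, forall_true_left]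
  constructor
  · rintro ⟨y, hy, rfl⟩ j
    refine Fin.lastCases ?_ (fun i => ?_) j
    · simp [snocZeroMap, T0]
    · simpa [snocZeroMap, T0, cnone] using hy i
  · intro hz
    refine ⟨fun i => z i.castSucc, fun i => by simpa [T0, cnone] using hz i.castSucc, ?_⟩
    funext j
    refine Fin.lastCases ?_ (fun i => ?_) j
    · have := hz (Fin.last 3)
      simp only [T0] at this
      rw [Fin.snoc_last] at this
      simp only [Set.mem_singleton_iff] at this
      simp [snocZeroMap, this]
    · simp [snocZeroMap]

lemma P_eq_PF : pyrPt (unitCube 3) 0 = PF cnone := by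
  have h1 : (fun x : V 3 => Fin.snoc x (0:ℝ)) '' unitCube 3
      = convexHull ℝ (VS cnone : Set (V 4)) := by
    rw [← image_cubeVerts, unitCube_eq_hull, ← snocZeroMap.image_convexHull]
    rfl
  have h2 : Fin.snoc (0 : V 3) (1:ℝ) = apexPt := rfl
  rw [pyrPt, h1, h2, convexHull_convexHull_union_left, Set.union_singleton, PF_eq_hull]


def faceVerts {d : ℕ} (S : Finset (V d)) (ℓ : V d →ₗ[ℝ] ℝ) : Finset (V d) :=
  S.filter fun v => ∀ w ∈ S, ℓ w ≤ ℓ v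

lemma faceSet_hull {d : ℕ} (S : Finset (V d)) (hS : S.Nonempty) (ℓ : V d →ₗ[ℝ] ℝ) :
    faceSet (convexHull ℝ (S : Set (V d))) ℓ
      = convexHull ℝ ((faceVerts S ℓ : Finset (V d)) : Set (V d)) := by
  obtain ⟨v₀, hv₀, hmax⟩ := S.exists_max_image ℓ hS
  set μ := ℓ v₀ with hμ
  have hA : ∀ y ∈ convexHull ℝ (S : Set (V d)), ℓ y ≤ μ := by
    intro y hy
    have : convexHull ℝ (S : Set (V d)) ⊆ ℓ ⁻¹' (Set.Iic μ) := by
      apply convexHull_min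
      · intro w hw
        exact hmax w hw
      · exact (convex_Iic μ).linear_preimage ℓ
    exact this hy
  have hMS : faceVerts S ℓ ⊆ S := Finset.filter_subset _ _
  have hMμ : ∀ v ∈ faceVerts S ℓ, ℓ v = μ := by
    intro v hv
    rw [faceVerts, Finset.mem_filter] at hv
    exact le_antisymm (hmax v hv.1) (hv.2 v₀ hv₀)
  have hB : ∀ x ∈ convexHull ℝ ((faceVerts S ℓ : Finset (V d)) : Set (V d)), ℓ x = μ := by
    intro x hx
    have : convexHull ℝ ((faceVerts S ℓ : Finset (V d)) : Set (V d)) ⊆ ℓ ⁻¹' {μ} := by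
      apply convexHull_min
      · intro w hw
        exact hMμ w hw
      · exact (convex_singleton μ).linear_preimage ℓ
    exact this hx
  ext x
  constructor
  · rintro ⟨hxP, hxm⟩
    have hxμ : ℓ x = μ := le_antisymm (hA x hxP) (hxm v₀ (subset_convexHull ℝ _ hv₀))
    rw [Finset.convexHull_eq] at hxP
    obtain ⟨w, hw0, hw1, hcm⟩ := hxP
    have hsum : ℓ x = ∑ v ∈ S, w v * ℓ v := by
      rw [← hcm, Finset.centerMass_eq_of_sum_1 _ _ hw1, map_sum]
      simp [smul_eq_mul]
    have hkey : ∀ v ∈ S, w v ≠ 0 → ℓ v = μ := by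
      by_contra hcon
      push_neg at hcon
      obtain ⟨v, hvS, hwv, hvμ⟩ := hcon
      have hlt : ℓ v < μ := lt_of_le_of_ne (hmax v hvS) hvμ
      have hwv' : 0 < w v := lt_of_le_of_ne (hw0 v hvS) (Ne.symm hwv)
      have : ∑ u ∈ S, w u * ℓ u < ∑ u ∈ S, w u * μ := by
        apply Finset.sum_lt_sum
        · intro u hu
          exact mul_le_mul_of_nonneg_left (hmax u hu) (hw0 u hu)
        · exact ⟨v, hvS, by nlinarith⟩
      rw [← Finset.sum_mul, hw1, one_mul] at this
      rw [hxμ] at hsum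
      linarith
    set t' := S.filter fun v => w v ≠ 0 with ht'
    have ht'M : t' ⊆ faceVerts S ℓ := by
      intro v hv
      rw [ht', Finset.mem_filter] at hv
      rw [faceVerts, Finset.mem_filter]
      exact ⟨hv.1, fun u hu => (hkey v hv.1 hv.2).symm ▸ hmax u hu⟩
    have hxc : x = t'.centerMass w id := by
      rw [← hcm, ht', Finset.centerMass_filter_ne_zero]
    rw [hxc]
    have hsum' : (0:ℝ) < ∑ v ∈ t', w v := by
      rw [ht', Finset.sum_filter_ne_zero, hw1]; norm_num
    exact Finset.centerMass_mem_convexHull (t := t') (w := w) (z := id)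
      (s := ((faceVerts S ℓ : Finset (V d)) : Set (V d)))
      (fun v hv => hw0 v (Finset.filter_subset _ _ hv)) hsum'
      (fun v hv => by exact_mod_cast ht'M hv)
  · intro hx
    refine ⟨convexHull_mono (by exact_mod_cast hMS) hx, ?_⟩
    intro y hy
    rw [hB x hx]
    exact hA y hy


def Sfin : Finset (V 4) := insert apexPt (VS cnone)

lemma Sfin_nonempty : Sfin.Nonempty := ⟨apexPt, Finset.mem_insert_self _ _⟩

lemma P_eq_hull_Sfin : pyrPt (unitCube 3) 0 = convexHull ℝ (Sfin : Set (V 4)) := by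
  rw [P_eq_PF, PF_eq_hull cnone, Sfin, Finset.coe_insert]

lemma compat_cnone (τ : Fin 3 → Bool) : compat cnone τ := by
  intro i b h; simp [cnone] at h

lemma mem_Sfin {v : V 4} : v ∈ Sfin ↔ v = apexPt ∨ ∃ τ, vtx τ = v := by
  simp only [Sfin, Finset.mem_insert, VS, Finset.mem_image, Finset.mem_filter, Finset.mem_univ,
    true_and]
  constructor
  · rintro (h | ⟨τ, _, h⟩)
    · exact Or.inl h
    · exact Or.inr ⟨τ, h⟩
  · rintro (h | ⟨τ, h⟩)
    · exact Or.inl h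
    · exact Or.inr ⟨τ, compat_cnone τ, h⟩

/-- coefficients of a linear functional -/
def aℓ (ℓ : V 4 →ₗ[ℝ] ℝ) (j : Fin 4) : ℝ := ℓ (fun k => if j = k then 1 else 0)

lemma ℓ_eq_sum (ℓ : V 4 →ₗ[ℝ] ℝ) (x : V 4) : ℓ x = ∑ j, x j * aℓ ℓ j := by
  rw [LinearMap.pi_apply_eq_sum_univ ℓ x]
  simp [aℓ, smul_eq_mul]

lemma ℓ_vtx (ℓ : V 4 →ₗ[ℝ] ℝ) (τ : Fin 3 → Bool) :
    ℓ (vtx τ) = ∑ i : Fin 3, cval (τ i) * aℓ ℓ i.castSucc := by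
  rw [ℓ_eq_sum, Fin.sum_univ_castSucc]
  simp [vtx_last, vtx_castSucc]

lemma ℓ_apex (ℓ : V 4 →ₗ[ℝ] ℝ) : ℓ apexPt = aℓ ℓ (Fin.last 3) := by
  rw [ℓ_eq_sum, Fin.sum_univ_castSucc]
  simp [apex_last, apex_castSucc]

def sig (ℓ : V 4 →ₗ[ℝ] ℝ) : Sig := fun i =>
  if 0 < aℓ ℓ i.castSucc then some true
  else if aℓ ℓ i.castSucc < 0 then some false else none

def pmax (ℓ : V 4 →ₗ[ℝ] ℝ) : ℝ := ∑ i : Fin 3, max (aℓ ℓ i.castSucc) 0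

lemma sig_true {ℓ i} (h : sig ℓ i = some true) : 0 < aℓ ℓ i.castSucc := by
  unfold sig at h; split_ifs at h with h1 h2 <;> simp_all

lemma sig_false {ℓ i} (h : sig ℓ i = some false) : aℓ ℓ i.castSucc < 0 := by
  unfold sig at h; split_ifs at h with h1 h2 <;> simp_all

lemma sig_none {ℓ i} (h : sig ℓ i = none) : aℓ ℓ i.castSucc = 0 := by
  unfold sig at h; split_ifs at h with h1 h2 <;> simp_all
  linarith

lemma vtx_le_pmax (ℓ : V 4 →ₗ[ℝ] ℝ) (τ : Fin 3 → Bool) : ℓ (vtx τ) ≤ pmax ℓ := by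
  rw [ℓ_vtx, pmax]
  apply Finset.sum_le_sum
  intro i _
  cases hτ : τ i <;> simp [cval, le_max_iff, le_refl]

lemma compat_val {ℓ τ} (h : compat (sig ℓ) τ) : ℓ (vtx τ) = pmax ℓ := by
  rw [ℓ_vtx, pmax]
  apply Finset.sum_congr rfl
  intro i _
  rcases hs : sig ℓ i with _ | b
  · have := sig_none hs
    simp [this]
  · cases b
    · have := sig_false hs
      rw [h i false hs]
      simp [cval, max_eq_right this.le]
    · have := sig_true hs
      rw [h i true hs]
      simp [cval, max_eq_left this.le]

lemma val_compat {ℓ τ} (h : ℓ (vtx τ) = pmax ℓ) : compat (sig ℓ) τ := by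
  by_contra hcon
  unfold compat at hcon
  push_neg at hcon
  obtain ⟨i, b, hib, hne⟩ := hcon
  have hstrict : ∑ i : Fin 3, cval (τ i) * aℓ ℓ i.castSucc
      < ∑ i : Fin 3, max (aℓ ℓ i.castSucc) 0 := by
    apply Finset.sum_lt_sum
    · intro u _
      cases hτ : τ u <;> simp [cval, le_max_iff, le_refl]
    · refine ⟨i, Finset.mem_univ i, ?_⟩
      cases b
      · have ha := sig_false hib
        have : τ i = true := by
          cases hτ : τ i
          · exact absurd hτ hne
          · rfl
        rw [this]
        simp [cval, max_eq_right ha.le]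
        exact ha
      · have ha := sig_true hib
        have : τ i = false := by
          cases hτ : τ i
          · rfl
          · exact absurd hτ hne
        rw [this]
        simp [cval, max_eq_left ha.le]
        exact ha
  rw [ℓ_vtx, pmax] at h
  linarith [h, hstrict]

lemma faceVerts_lt {ℓ} (h : aℓ ℓ (Fin.last 3) < pmax ℓ) : faceVerts Sfin ℓ = VS (sig ℓ) := by
  have hex : ℓ (vtx (τσ (sig ℓ))) = pmax ℓ := compat_val (compat_τσ _)
  ext v
  rw [faceVerts, Finset.mem_filter]
  constructor
  · rintro ⟨hvS, hvm⟩
    rcases mem_Sfin.1 hvS with rfl | ⟨τ, rfl⟩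
    · exfalso
      have := hvm (vtx (τσ (sig ℓ))) (mem_Sfin.2 (Or.inr ⟨_, rfl⟩))
      rw [hex, ℓ_apex] at this
      linarith
    · have h1 : pmax ℓ ≤ ℓ (vtx τ) := by
        have := hvm (vtx (τσ (sig ℓ))) (mem_Sfin.2 (Or.inr ⟨_, rfl⟩))
        rwa [hex] at this
      have h2 : ℓ (vtx τ) = pmax ℓ := le_antisymm (vtx_le_pmax ℓ τ) h1
      exact vtx_mem_VS (val_compat h2)
  · intro hv
    simp only [VS, Finset.mem_image, Finset.mem_filter, Finset.mem_univ, true_and] at hv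
    obtain ⟨τ, hτ, rfl⟩ := hv
    refine ⟨mem_Sfin.2 (Or.inr ⟨τ, rfl⟩), ?_⟩
    intro w hw
    rw [compat_val hτ]
    rcases mem_Sfin.1 hw with rfl | ⟨τ', rfl⟩
    · rw [ℓ_apex]; linarith
    · exact vtx_le_pmax ℓ τ'

lemma faceVerts_eq {ℓ} (h : aℓ ℓ (Fin.last 3) = pmax ℓ) :
    faceVerts Sfin ℓ = insert apexPt (VS (sig ℓ)) := by
  ext v
  rw [faceVerts, Finset.mem_filter, Finset.mem_insert]
  constructor
  · rintro ⟨hvS, hvm⟩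
    rcases mem_Sfin.1 hvS with rfl | ⟨τ, rfl⟩
    · exact Or.inl rfl
    · have h1 : pmax ℓ ≤ ℓ (vtx τ) := by
        have := hvm apexPt (mem_Sfin.2 (Or.inl rfl))
        rwa [ℓ_apex, h] at this
      exact Or.inr (vtx_mem_VS (val_compat (le_antisymm (vtx_le_pmax ℓ τ) h1)))
  · intro hv
    have hvv : ∀ w ∈ Sfin, ℓ w ≤ pmax ℓ := by
      intro w hw
      rcases mem_Sfin.1 hw with rfl | ⟨τ', rfl⟩
      · rw [ℓ_apex, h]
      · exact vtx_le_pmax ℓ τ'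
    rcases hv with rfl | hv
    · refine ⟨mem_Sfin.2 (Or.inl rfl), ?_⟩
      intro w hw
      rw [ℓ_apex, h]
      exact hvv w hw
    · simp only [VS, Finset.mem_image, Finset.mem_filter, Finset.mem_univ, true_and] at hv
      obtain ⟨τ, hτ, rfl⟩ := hv
      refine ⟨mem_Sfin.2 (Or.inr ⟨τ, rfl⟩), ?_⟩
      intro w hw
      rw [compat_val hτ]
      exact hvv w hw

lemma faceVerts_gt {ℓ} (h : pmax ℓ < aℓ ℓ (Fin.last 3)) : faceVerts Sfin ℓ = {apexPt} := by
  ext v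
  rw [faceVerts, Finset.mem_filter, Finset.mem_singleton]
  constructor
  · rintro ⟨hvS, hvm⟩
    rcases mem_Sfin.1 hvS with rfl | ⟨τ, rfl⟩
    · rfl
    · exfalso
      have := hvm apexPt (mem_Sfin.2 (Or.inl rfl))
      rw [ℓ_apex] at this
      linarith [vtx_le_pmax ℓ τ]
  · rintro rfl
    refine ⟨mem_Sfin.2 (Or.inl rfl), ?_⟩
    intro w hw
    rcases mem_Sfin.1 hw with rfl | ⟨τ', rfl⟩
    · exact le_refl _
    · rw [ℓ_apex]
      linarith [vtx_le_pmax ℓ τ']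

lemma faceSet_lt {ℓ} (h : aℓ ℓ (Fin.last 3) < pmax ℓ) :
    faceSet (pyrPt (unitCube 3) 0) ℓ = CF (sig ℓ) := by
  rw [P_eq_hull_Sfin, faceSet_hull Sfin Sfin_nonempty, faceVerts_lt h, CF_eq_hull]

lemma faceSet_eq {ℓ} (h : aℓ ℓ (Fin.last 3) = pmax ℓ) :
    faceSet (pyrPt (unitCube 3) 0) ℓ = PF (sig ℓ) := by
  rw [P_eq_hull_Sfin, faceSet_hull Sfin Sfin_nonempty, faceVerts_eq h, PF_eq_hull,
    Finset.coe_insert]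

lemma faceSet_gt {ℓ} (h : pmax ℓ < aℓ ℓ (Fin.last 3)) :
    faceSet (pyrPt (unitCube 3) 0) ℓ = {apexPt} := by
  rw [P_eq_hull_Sfin, faceSet_hull Sfin Sfin_nonempty, faceVerts_gt h]
  simp

lemma face_classify (ℓ : V 4 →ₗ[ℝ] ℝ) :
    faceSet (pyrPt (unitCube 3) 0) ℓ = CF (sig ℓ) ∨
    faceSet (pyrPt (unitCube 3) 0) ℓ = PF (sig ℓ) ∨
    faceSet (pyrPt (unitCube 3) 0) ℓ = {apexPt} := by
  rcases lt_trichotomy (aℓ ℓ (Fin.last 3)) (pmax ℓ) with h | h | h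
  · exact Or.inl (faceSet_lt h)
  · exact Or.inr (Or.inl (faceSet_eq h))
  · exact Or.inr (Or.inr (faceSet_gt h))


def la (aa : V 4) : V 4 →ₗ[ℝ] ℝ where
  toFun x := ∑ j, x j * aa j
  map_add' x y := by
    simp only [Pi.add_apply, add_mul]
    rw [Finset.sum_add_distrib]
  map_smul' c x := by
    simp only [Pi.smul_apply, smul_eq_mul, RingHom.id_apply, Finset.mul_sum]
    congr 1
    funext j
    ring

lemma aℓ_la (aa : V 4) (j : Fin 4) : aℓ (la aa) j = aa j := by
  simp only [aℓ, la, LinearMap.coe_mk, AddHom.coe_mk]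
  rw [Finset.sum_eq_single j]
  · simp
  · intro k _ hk
    simp [Ne.symm hk]
  · simp

def ntrue (σ : Sig) : ℕ := (Finset.univ.filter fun i => σ i = some true).card

/-- coefficient vector whose functional exposes `CF σ` (with last coord `ntrue σ - 1`)
or `PF σ` (with last coord `ntrue σ`). -/
def av (σ : Sig) (r : ℝ) : V 4 :=
  Fin.snoc (fun i => match σ i with
    | some true => (1:ℝ)
    | some false => -1
    | none => 0) r

lemma sig_la_av (σ : Sig) (r : ℝ) : sig (la (av σ r)) = σ := by
  funext i
  unfold sig
  rw [aℓ_la]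
  rcases hσ : σ i with _ | b
  · simp only [av, Fin.snoc_castSucc, hσ]
    norm_num
  · cases b <;> simp only [av, Fin.snoc_castSucc, hσ] <;> norm_num

lemma pmax_la_av (σ : Sig) (r : ℝ) : pmax (la (av σ r)) = (ntrue σ : ℝ) := by
  unfold pmax ntrue
  push_cast
  rw [Finset.card_filter, Nat.cast_sum]
  apply Finset.sum_congr rfl
  intro i _
  rw [aℓ_la]
  rcases hσ : σ i with _ | b
  · simp [av, hσ]
  · cases b <;> simp [av, hσ] <;> norm_num

lemma aℓ_la_last (σ : Sig) (r : ℝ) : aℓ (la (av σ r)) (Fin.last 3) = r := by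
  rw [aℓ_la]
  simp [av]

lemma exists_ℓ_CF (σ : Sig) : ∃ ℓ, faceSet (pyrPt (unitCube 3) 0) ℓ = CF σ := by
  refine ⟨la (av σ ((ntrue σ : ℝ) - 1)), ?_⟩
  have h : aℓ (la (av σ ((ntrue σ : ℝ) - 1))) (Fin.last 3) < pmax (la (av σ ((ntrue σ : ℝ) - 1))) := by
    rw [aℓ_la_last, pmax_la_av]
    linarith
  rw [faceSet_lt h, sig_la_av]

lemma exists_ℓ_PF (σ : Sig) : ∃ ℓ, faceSet (pyrPt (unitCube 3) 0) ℓ = PF σ := by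
  refine ⟨la (av σ (ntrue σ : ℝ)), ?_⟩
  have h : aℓ (la (av σ (ntrue σ : ℝ))) (Fin.last 3) = pmax (la (av σ (ntrue σ : ℝ))) := by
    rw [aℓ_la_last, pmax_la_av]
  rw [faceSet_eq h, sig_la_av]

lemma exists_ℓ_apex : ∃ ℓ, faceSet (pyrPt (unitCube 3) 0) ℓ = {apexPt} := by
  refine ⟨la apexPt, ?_⟩
  have hs : ∀ i : Fin 3, aℓ (la apexPt) i.castSucc = 0 := by
    intro i
    rw [aℓ_la]
    exact apex_castSucc i
  have h : pmax (la apexPt) < aℓ (la apexPt) (Fin.last 3) := by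
    rw [aℓ_la, apex_last]
    unfold pmax
    rw [Finset.sum_eq_zero]
    · norm_num
    · intro i _
      rw [hs i]
      simp
  exact faceSet_gt h


def eV (i : Fin 3) : V 4 := Pi.single i.castSucc (1:ℝ)

def BF (σ : Sig) : Finset (V 4) := (Finset.univ.filter fun i => σ i = none).image eV

def uσ (σ : Sig) : V 4 := apexPt - vtx (τσ σ)

lemma eV_last (i : Fin 3) : eV i (Fin.last 3) = 0 := by
  simp only [eV, Pi.single_apply]
  rw [if_neg (Fin.castSucc_lt_last i).ne']

lemma eV_castSucc (i i' : Fin 3) : eV i i'.castSucc = if i' = i then 1 else 0 := by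
  simp only [eV, Pi.single_apply, Fin.castSucc_inj]

lemma eV_injective : Function.Injective eV := by
  intro i i' h
  by_contra hne
  have := congrFun h i.castSucc
  rw [eV_castSucc, eV_castSucc, if_pos rfl, if_neg (fun hc : i = i' => hne hc)] at this
  norm_num at this

lemma BF_card (σ : Sig) : (BF σ).card = fc σ :=
  Finset.card_image_of_injective _ eV_injective

/-- vectors supported on free coordinates lie in the span of `BF σ` -/
lemma mem_span_BF {σ : Sig} {v : V 4} (hl : v (Fin.last 3) = 0)
    (hf : ∀ i : Fin 3, σ i ≠ none → v i.castSucc = 0) :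
    v ∈ Submodule.span ℝ (BF σ : Set (V 4)) := by
  have hv : v = ∑ i ∈ Finset.univ.filter (fun i => σ i = none), v i.castSucc • eV i := by
    funext j
    rw [Finset.sum_apply]
    refine Fin.lastCases ?_ (fun i' => ?_) j
    · rw [hl, Finset.sum_eq_zero]
      intro i _
      simp [eV_last]
    · by_cases hfree : σ i' = none
      · rw [Finset.sum_eq_single i']
        · simp [eV_castSucc]
        · intro i hi hne
          simp [eV_castSucc, Ne.symm hne]
        · intro hni
          exact absurd (Finset.mem_filter.2 ⟨Finset.mem_univ i', hfree⟩) hni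
      · rw [hf i' hfree, Finset.sum_eq_zero]
        intro i hi
        rw [Finset.mem_filter] at hi
        have : i' ≠ i := fun hc => hfree (hc ▸ hi.2)
        simp [eV_castSucc, this]
  rw [hv]
  apply Submodule.sum_mem
  intro i hi
  exact Submodule.smul_mem _ _ (Submodule.subset_span (by
    simp only [BF, Finset.coe_image, Set.mem_image, Finset.mem_coe]
    exact ⟨i, hi, rfl⟩))

lemma eV_eq_vsub {σ : Sig} {i : Fin 3} (h : σ i = none) :
    eV i = vtx (Function.update (τσ σ) i true) - vtx (τσ σ) := by
  funext j
  refine Fin.lastCases ?_ (fun i' => ?_) j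
  · simp [eV_last, vtx_last]
  · simp only [Pi.sub_apply, vtx_castSucc, eV_castSucc]
    by_cases hii : i' = i
    · subst hii
      rw [if_pos rfl, Function.update_self]
      have : τσ σ i' = false := by simp [τσ, h]
      rw [this]
      simp [cval]
    · rw [if_neg hii, Function.update_of_ne hii]
      simp

lemma compat_update {σ : Sig} {i : Fin 3} (h : σ i = none) :
    compat σ (Function.update (τσ σ) i true) := by
  intro k b hk
  have hki : k ≠ i := fun hc => by rw [hc, h] at hk; simp at hk
  rw [Function.update_of_ne hki]
  exact compat_τσ σ k b hk

lemma BF_subset_range (σ : Sig) :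
    (BF σ : Set (V 4)) ⊆ Set.range (Pi.basisFun ℝ (Fin 4)) := by
  intro v hv
  simp only [BF, Finset.coe_image, Set.mem_image, Finset.mem_coe] at hv
  obtain ⟨i, _, rfl⟩ := hv
  exact ⟨i.castSucc, by simp [eV]⟩

lemma BF_linindep (σ : Sig) :
    LinearIndependent ℝ ((↑) : ↥((BF σ : Finset (V 4)) : Set (V 4)) → V 4) :=
  ((linearIndepOn_id_range_iff (Pi.basisFun ℝ (Fin 4)).linearIndependent.injective).mpr (Pi.basisFun ℝ (Fin 4)).linearIndependent).mono (BF_subset_range σ)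

lemma span_BF_last {σ : Sig} {v : V 4} (hv : v ∈ Submodule.span ℝ (BF σ : Set (V 4))) :
    v (Fin.last 3) = 0 := by
  have : Submodule.span ℝ (BF σ : Set (V 4)) ≤ LinearMap.ker (LinearMap.proj (R := ℝ)
      (φ := fun _ : Fin 4 => ℝ) (Fin.last 3)) := by
    rw [Submodule.span_le]
    intro w hw
    simp only [BF, Finset.coe_image, Set.mem_image, Finset.mem_coe] at hw
    obtain ⟨i, _, rfl⟩ := hw
    simp only [SetLike.mem_coe, LinearMap.mem_ker, LinearMap.proj_apply]
    exact eV_last i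
  simpa using this hv

lemma uσ_last (σ : Sig) : uσ σ (Fin.last 3) = 1 := by
  simp [uσ, apex_last, vtx_last]

lemma uσ_castSucc (σ : Sig) (i : Fin 3) : uσ σ i.castSucc = -cval (τσ σ i) := by
  simp [uσ, apex_castSucc, vtx_castSucc]

lemma uσ_not_mem_span (σ : Sig) : uσ σ ∉ Submodule.span ℝ (BF σ : Set (V 4)) := by
  intro h
  have := span_BF_last h
  rw [uσ_last] at this
  norm_num at this

lemma vectorSpan_CF (σ : Sig) :
    vectorSpan ℝ (CF σ) = Submodule.span ℝ (BF σ : Set (V 4)) := by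
  apply le_antisymm
  · rw [vectorSpan_def, Submodule.span_le]
    intro v hv
    rw [Set.mem_vsub] at hv
    obtain ⟨x, hx, y, hy, rfl⟩ := hv
    apply mem_span_BF
    · have h1 := hx.1
      have h2 := hy.1
      simp only [vsub_eq_sub, Pi.sub_apply]
      rw [h1, h2, sub_zero]
    · intro i hfree
      rcases hσ : σ i with _ | b
      · exact absurd hσ hfree
      · have h1 := (hx.2 i).1 b hσ
        have h2 := (hy.2 i).1 b hσ
        simp only [vsub_eq_sub, Pi.sub_apply]
        rw [h1, h2, sub_self]
  · rw [Submodule.span_le]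
    intro v hv
    simp only [BF, Finset.coe_image, Set.mem_image, Finset.mem_coe, Finset.mem_filter] at hv
    obtain ⟨i, hi, rfl⟩ := hv
    rw [eV_eq_vsub hi.2]
    exact vsub_mem_vectorSpan ℝ (vtx_mem_CF (compat_update hi.2)) (vtx_mem_CF (compat_τσ σ))

lemma pdim_CF (σ : Sig) : Module.finrank ℝ (vectorSpan ℝ (CF σ)) = fc σ := by
  rw [vectorSpan_CF, finrank_span_finset_eq_card (BF_linindep σ), BF_card]

lemma uσ_not_mem_BF (σ : Sig) : uσ σ ∉ BF σ := by
  intro h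
  have : uσ σ ∈ Submodule.span ℝ (BF σ : Set (V 4)) := Submodule.subset_span h
  exact uσ_not_mem_span σ this

lemma vectorSpan_PF (σ : Sig) :
    vectorSpan ℝ (PF σ) = Submodule.span ℝ ((insert (uσ σ) (BF σ) : Finset (V 4)) : Set (V 4)) := by
  rw [Finset.coe_insert]
  apply le_antisymm
  · rw [vectorSpan_def, Submodule.span_le]
    intro v hv
    rw [Set.mem_vsub] at hv
    obtain ⟨x, hx, y, hy, rfl⟩ := hv
    set dd := x (Fin.last 3) - y (Fin.last 3) with hdd
    have hw : (x -ᵥ y) - dd • uσ σ ∈ Submodule.span ℝ (BF σ : Set (V 4)) := by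
      apply mem_span_BF
      · simp only [vsub_eq_sub, Pi.sub_apply, Pi.smul_apply, smul_eq_mul, uσ_last]
        ring
      · intro i hfree
        rcases hσ : σ i with _ | b
        · exact absurd hσ hfree
        · have h1 := (hx.2 i).1 b hσ
          have h2 := (hy.2 i).1 b hσ
          have hτ : τσ σ i = b := compat_τσ σ i b hσ
          simp only [vsub_eq_sub, Pi.sub_apply, Pi.smul_apply, smul_eq_mul, uσ_castSucc, hτ,
            h1, h2, hdd]
          ring
    have : x -ᵥ y = dd • uσ σ + ((x -ᵥ y) - dd • uσ σ) := by ring_nf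
    rw [this]
    apply Submodule.add_mem
    · exact Submodule.smul_mem _ _ (Submodule.subset_span (Set.mem_insert _ _))
    · exact Submodule.span_mono (Set.subset_insert _ _) hw
  · rw [Submodule.span_le]
    intro v hv
    rcases Set.mem_insert_iff.1 hv with rfl | hv
    · rw [uσ]
      exact vsub_mem_vectorSpan ℝ (apex_mem_PF σ) (vtx_mem_PF (compat_τσ σ))
    · simp only [BF, Finset.coe_image, Set.mem_image, Finset.mem_coe, Finset.mem_filter] at hv
      obtain ⟨i, hi, rfl⟩ := hv
      rw [eV_eq_vsub hi.2]
      exact vsub_mem_vectorSpan ℝ (vtx_mem_PF (compat_update hi.2)) (vtx_mem_PF (compat_τσ σ))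

lemma insert_linindep (σ : Sig) :
    LinearIndependent ℝ ((↑) : ↥(((insert (uσ σ) (BF σ) : Finset (V 4)) : Finset (V 4)) : Set (V 4)) → V 4) := by
  have h := LinearIndepOn.id_insert (BF_linindep σ) (uσ_not_mem_span σ)
  rw [Finset.coe_insert]
  exact h

lemma pdim_PF (σ : Sig) : Module.finrank ℝ (vectorSpan ℝ (PF σ)) = fc σ + 1 := by
  rw [vectorSpan_PF, finrank_span_finset_eq_card (insert_linindep σ),
    Finset.card_insert_of_notMem (uσ_not_mem_BF σ), BF_card]

lemma pdim_apex : Module.finrank ℝ (vectorSpan ℝ ({apexPt} : Set (V 4))) = 0 := by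
  rw [vectorSpan_singleton]
  exact finrank_bot ℝ (V 4)


lemma CF_nonempty (σ : Sig) : (CF σ).Nonempty := ⟨vtx (τσ σ), vtx_mem_CF (compat_τσ σ)⟩
lemma PF_nonempty (σ : Sig) : (PF σ).Nonempty := ⟨apexPt, apex_mem_PF σ⟩

lemma CFs_zero (σ : Sig) : CFs σ 0 = {0} := by
  ext x
  simp only [CFs, Set.mem_setOf_eq, Set.mem_singleton_iff, Set.mem_Icc]
  constructor
  · rintro ⟨hl, hi⟩
    funext j
    simp only [Pi.zero_apply]
    revert j
    intro j
    refine Fin.lastCases ?_ (fun i => ?_) j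
    · exact hl
    · rcases hσ : σ i with _ | b
      · have := (hi i).2 hσ
        exact le_antisymm this.2 this.1
      · have := (hi i).1 b hσ
        rw [this, zero_mul]
  · rintro rfl
    refine ⟨rfl, fun i => ⟨fun b hb => by simp, fun hn => by simp⟩⟩

lemma PFs_zero (σ : Sig) : PFs σ 0 = {0} := by
  ext x
  simp only [PFs, Set.mem_setOf_eq, Set.mem_singleton_iff, Set.mem_Icc]
  constructor
  · rintro ⟨hl, hi⟩
    have hl0 : x (Fin.last 3) = 0 := le_antisymm hl.2 hl.1
    funext j
    simp only [Pi.zero_apply]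
    revert j
    intro j
    refine Fin.lastCases ?_ (fun i => ?_) j
    · exact hl0
    · rcases hσ : σ i with _ | b
      · have := (hi i).2 hσ
        rw [hl0] at this
        have h1 : (0:ℝ) ≤ x i.castSucc := this.1
        have h2 : x i.castSucc ≤ 0 - 0 := this.2
        linarith
      · have := (hi i).1 b hσ
        rw [hl0] at this
        rw [this]; ring
  · rintro rfl
    exact ⟨⟨le_refl 0, le_refl 0⟩, fun i => ⟨fun b hb => by simp, fun hn => by simp⟩⟩

lemma smul_CFs {c : ℝ} (hc : 0 < c) (σ : Sig) :
    (fun y => c • y) '' CFs σ 1 = CFs σ c := by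
  ext x
  constructor
  · rintro ⟨y, ⟨hl, hi⟩, rfl⟩
    refine ⟨by simp [hl], fun i => ⟨fun b hb => ?_, fun hn => ?_⟩⟩
    · have := (hi i).1 b hb
      simp only [Pi.smul_apply, smul_eq_mul, this]
      ring
    · have := (hi i).2 hn
      simp only [Pi.smul_apply, smul_eq_mul, Set.mem_Icc]
      exact ⟨mul_nonneg hc.le this.1, by nlinarith [this.2]⟩
  · rintro ⟨hl, hi⟩
    refine ⟨c⁻¹ • x, ⟨by simp [hl], fun i => ⟨fun b hb => ?_, fun hn => ?_⟩⟩, ?_⟩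
    · have := (hi i).1 b hb
      simp only [Pi.smul_apply, smul_eq_mul, this]
      field_simp
    · have := (hi i).2 hn
      simp only [Pi.smul_apply, smul_eq_mul, Set.mem_Icc]
      constructor
      · exact mul_nonneg (inv_nonneg.2 hc.le) this.1
      · rw [inv_mul_le_iff₀ hc, mul_one]
        exact this.2
    · funext j
      simp only [Pi.smul_apply, smul_eq_mul]
      rw [← mul_assoc, mul_inv_cancel₀ hc.ne', one_mul]

lemma smul_PFs {c : ℝ} (hc : 0 < c) (σ : Sig) :
    (fun y => c • y) '' PFs σ 1 = PFs σ c := by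
  ext x
  constructor
  · rintro ⟨y, ⟨hl, hi⟩, rfl⟩
    have hy0 := hl.1
    have hy1 := hl.2
    refine ⟨?_, fun i => ⟨fun b hb => ?_, fun hn => ?_⟩⟩
    · simp only [Pi.smul_apply, smul_eq_mul, Set.mem_Icc]
      exact ⟨mul_nonneg hc.le hy0, by nlinarith⟩
    · have := (hi i).1 b hb
      simp only [Pi.smul_apply, smul_eq_mul, this]
      ring
    · have h2 := (hi i).2 hn
      simp only [Pi.smul_apply, smul_eq_mul, Set.mem_Icc]
      exact ⟨mul_nonneg hc.le h2.1, by nlinarith [h2.2]⟩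
  · rintro ⟨hl, hi⟩
    have hx0 := hl.1
    have hx1 := hl.2
    refine ⟨c⁻¹ • x, ⟨⟨?_, ?_⟩, fun i => ⟨fun b hb => ?_, fun hn => ?_⟩⟩, ?_⟩
    · simp only [Pi.smul_apply, smul_eq_mul]
      exact mul_nonneg (inv_nonneg.2 hc.le) hx0
    · simp only [Pi.smul_apply, smul_eq_mul]
      rw [inv_mul_le_iff₀ hc, mul_one]
      exact hx1
    · have := (hi i).1 b hb
      simp only [Pi.smul_apply, smul_eq_mul, this]
      field_simp
    · have h2 := (hi i).2 hn
      simp only [Pi.smul_apply, smul_eq_mul, Set.mem_Icc]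
      refine ⟨mul_nonneg (inv_nonneg.2 hc.le) h2.1, ?_⟩
      rw [← mul_le_mul_iff_right₀ hc, ← mul_assoc, mul_inv_cancel₀ hc.ne', one_mul]
      have heq : c * (1 - c⁻¹ * x (Fin.last 3)) = c - x (Fin.last 3) := by
        field_simp
      rw [heq]
      exact h2.2
    · funext j
      simp only [Pi.smul_apply, smul_eq_mul]
      rw [← mul_assoc, mul_inv_cancel₀ hc.ne', one_mul]

def colF (o : Option Bool) (n : ℕ) : Finset ℕ :=
  match o with
  | none => Finset.range (n + 1)
  | some b => {cond b n 0}

lemma cast_cond (b : Bool) (n : ℕ) : ((cond b n 0 : ℕ) : ℝ) = n * cval b := by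
  cases b <;> simp [cval]

def ψC (m : Fin 3 → ℕ) : V 4 := Fin.snoc (fun i => (m i : ℝ)) 0

def ψP (h : ℕ) (m : Fin 3 → ℕ) : V 4 := Fin.snoc (fun i => (m i : ℝ)) (h : ℝ)

lemma ψP_injective (h : ℕ) : Function.Injective (ψP h) := by
  intro m m' hmm
  funext i
  have := congrFun hmm i.castSucc
  simp only [ψP, Fin.snoc_castSucc] at this
  exact_mod_cast this

lemma ψC_injective : Function.Injective ψC := by
  intro m m' hmm
  funext i
  have := congrFun hmm i.castSucc
  simp only [ψC, Fin.snoc_castSucc] at this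
  exact_mod_cast this

lemma cast_toNat_eq {z : ℤ} {r : ℝ} (h : r = (z:ℝ)) (hr : 0 ≤ r) :
    ((z.toNat : ℕ) : ℝ) = r := by
  have hz0 : (0:ℤ) ≤ z := by
    have : (0:ℝ) ≤ (z:ℝ) := h ▸ hr
    exact_mod_cast this
  rw [h]
  exact_mod_cast Int.toNat_of_nonneg hz0

def LFC (σ : Sig) (t : ℕ) : Finset (V 4) :=
  (Fintype.piFinset fun i : Fin 3 => colF (σ i) t).image ψC

def LFP (σ : Sig) (t : ℕ) : Finset (V 4) :=
  (Finset.range (t + 1)).biUnion fun h =>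
    (Fintype.piFinset fun i : Fin 3 => colF (σ i) (t - h)).image (ψP h)

lemma latt_CFs (σ : Sig) (t : ℕ) :
    {x | x ∈ CFs σ (t : ℝ) ∧ IsLatticePoint x} = (LFC σ t : Set (V 4)) := by
  ext x
  simp only [Set.mem_setOf_eq, LFC, Finset.coe_image, Set.mem_image, Finset.mem_coe,
    Fintype.mem_piFinset]
  constructor
  · rintro ⟨⟨hl, hi⟩, hlat⟩
    have hm : ∀ i : Fin 3, ∃ m : ℕ, (m : ℝ) = x i.castSucc ∧ m ∈ colF (σ i) t := by
      intro i
      obtain ⟨z, hz⟩ := hlat i.castSucc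
      rcases hσ : σ i with _ | b
      · have hb := (hi i).2 hσ
        have hcast : ((z.toNat : ℕ) : ℝ) = x i.castSucc := cast_toNat_eq hz hb.1
        refine ⟨z.toNat, hcast, ?_⟩
        simp only [colF, Finset.mem_range, Nat.lt_succ_iff]
        have : ((z.toNat : ℕ) : ℝ) ≤ (t : ℝ) := by rw [hcast]; exact hb.2
        exact_mod_cast this
      · have hb := (hi i).1 b hσ
        refine ⟨cond b t 0, ?_, by simp [colF]⟩
        rw [cast_cond, hb]
    choose m hm1 hm2 using hm
    refine ⟨m, hm2, ?_⟩
    funext j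
    refine Fin.lastCases ?_ (fun i => ?_) j
    · simp [ψC, hl]
    · simp [ψC, hm1 i]
  · rintro ⟨m, hm, rfl⟩
    refine ⟨⟨by simp [ψC], fun i => ⟨fun b hb => ?_, fun hn => ?_⟩⟩, ?_⟩
    · have := hm i
      rw [hb] at this
      simp only [colF, Finset.mem_singleton] at this
      simp only [ψC, Fin.snoc_castSucc, this, cast_cond]
    · have := hm i
      rw [hn] at this
      simp only [colF, Finset.mem_range] at this
      simp only [ψC, Fin.snoc_castSucc, Set.mem_Icc]
      constructor
      · positivity
      · exact_mod_cast Nat.lt_succ_iff.1 this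
    · intro j
      refine Fin.lastCases ?_ (fun i => ?_) j
      · exact ⟨0, by simp [ψC]⟩
      · exact ⟨m i, by simp [ψC]⟩

lemma latt_PFs (σ : Sig) (t : ℕ) :
    {x | x ∈ PFs σ (t : ℝ) ∧ IsLatticePoint x} = (LFP σ t : Set (V 4)) := by
  ext x
  simp only [Set.mem_setOf_eq, LFP, Finset.coe_biUnion, Set.mem_iUnion, Finset.mem_coe,
    Finset.mem_range, Finset.mem_image, Fintype.mem_piFinset]
  constructor
  · rintro ⟨⟨hl, hi⟩, hlat⟩
    obtain ⟨zh, hzh⟩ := hlat (Fin.last 3)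
    set hh := zh.toNat with hhdef
    have hhle : (hh : ℝ) = x (Fin.last 3) := cast_toNat_eq hzh hl.1
    have hht : hh ≤ t := by
      have : (hh : ℝ) ≤ (t : ℝ) := by rw [hhle]; exact hl.2
      exact_mod_cast this
    have hsub : ((t - hh : ℕ) : ℝ) = (t : ℝ) - x (Fin.last 3) := by
      rw [Nat.cast_sub hht, hhle]
    have hm : ∀ i : Fin 3, ∃ m : ℕ, (m : ℝ) = x i.castSucc ∧ m ∈ colF (σ i) (t - hh) := by
      intro i
      obtain ⟨z, hz⟩ := hlat i.castSucc
      rcases hσ : σ i with _ | b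
      · have hb := (hi i).2 hσ
        have hcast : ((z.toNat : ℕ) : ℝ) = x i.castSucc := cast_toNat_eq hz hb.1
        refine ⟨z.toNat, hcast, ?_⟩
        simp only [colF, Finset.mem_range, Nat.lt_succ_iff]
        have : ((z.toNat : ℕ) : ℝ) ≤ ((t - hh : ℕ) : ℝ) := by
          rw [hcast, hsub]
          exact hb.2
        exact_mod_cast this
      · have hb := (hi i).1 b hσ
        refine ⟨cond b (t - hh) 0, ?_, by simp [colF]⟩
        rw [cast_cond, hb, hsub]
        ring
    choose m hm1 hm2 using hm
    refine ⟨hh, Nat.lt_succ_of_le hht, m, hm2, ?_⟩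
    funext j
    refine Fin.lastCases ?_ (fun i => ?_) j
    · simp [ψP, hhle]
    · simp [ψP, hm1 i]
  · rintro ⟨h, hht, m, hm, rfl⟩
    have hht' : h ≤ t := Nat.lt_succ_iff.1 hht
    have hsub : ((t - h : ℕ) : ℝ) = (t : ℝ) - (h : ℝ) := by
      rw [Nat.cast_sub hht']
    refine ⟨⟨⟨?_, ?_⟩, fun i => ⟨fun b hb => ?_, fun hn => ?_⟩⟩, ?_⟩
    · simp only [ψP, Fin.snoc_last]
      positivity
    · simp only [ψP, Fin.snoc_last]
      exact_mod_cast hht'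
    · have hmi := hm i
      rw [hb] at hmi
      simp only [colF, Finset.mem_singleton] at hmi
      simp only [ψP, Fin.snoc_castSucc, Fin.snoc_last, hmi, cast_cond]
      rw [hsub]
      ring
    · have hmi := hm i
      rw [hn] at hmi
      simp only [colF, Finset.mem_range, Nat.lt_succ_iff] at hmi
      simp only [ψP, Fin.snoc_castSucc, Fin.snoc_last, Set.mem_Icc]
      constructor
      · positivity
      · rw [← hsub]
        exact_mod_cast hmi
    · intro j
      refine Fin.lastCases ?_ (fun i => ?_) j
      · exact ⟨h, by simp [ψP]⟩
      · exact ⟨m i, by simp [ψP]⟩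

lemma card_piFinset_colF (σ : Sig) (n : ℕ) :
    (Fintype.piFinset fun i : Fin 3 => colF (σ i) n).card = (n + 1) ^ fc σ := by
  rw [Fintype.card_piFinset]
  rw [← Finset.prod_filter_mul_prod_filter_not Finset.univ (fun i => σ i = none)]
  have h1 : ∀ i ∈ Finset.univ.filter (fun i => σ i = none), (colF (σ i) n).card = n + 1 := by
    intro i hi
    rw [Finset.mem_filter] at hi
    rw [hi.2]
    simp [colF]
  have h2 : ∀ i ∈ Finset.univ.filter (fun i => ¬σ i = none), (colF (σ i) n).card = 1 := by
    intro i hi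
    rw [Finset.mem_filter] at hi
    rcases hσ : σ i with _ | b
    · exact absurd hσ hi.2
    · simp [colF]
  rw [Finset.prod_congr rfl h1, Finset.prod_congr rfl h2, Finset.prod_const, Finset.prod_const]
  simp [fc]

lemma LFC_card (σ : Sig) (t : ℕ) : (LFC σ t).card = (t + 1) ^ fc σ := by
  rw [LFC, Finset.card_image_of_injective _ ψC_injective, card_piFinset_colF]

lemma LFP_card (σ : Sig) (t : ℕ) :
    (LFP σ t).card = ∑ h ∈ Finset.range (t + 1), (t - h + 1) ^ fc σ := by
  rw [LFP, Finset.card_biUnion]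
  · apply Finset.sum_congr rfl
    intro h _
    rw [Finset.card_image_of_injective _ (ψP_injective h), card_piFinset_colF]
  · intro h _ h' _ hne
    rw [Function.onFun, Finset.disjoint_left]
    intro a ha ha'
    rw [Finset.mem_image] at ha ha'
    obtain ⟨m, _, rfl⟩ := ha
    obtain ⟨m', _, hm'⟩ := ha'
    have := congrFun hm' (Fin.last 3)
    simp only [ψP, Fin.snoc_last] at this
    exact hne (by exact_mod_cast this.symm)

lemma ehr_CF (σ : Sig) (t : ℕ) : ehr (CF σ) t = (t + 1) ^ fc σ := by
  unfold ehr
  have himg : (fun y => (t : ℝ) • y) '' CF σ = CFs σ (t : ℝ) := by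
    rcases Nat.eq_zero_or_pos t with rfl | ht
    · push_cast
      rw [CFs_zero]
      ext x
      simp only [Set.mem_image, Set.mem_singleton_iff]
      constructor
      · rintro ⟨y, _, rfl⟩
        simp
      · rintro rfl
        exact ⟨vtx (τσ σ), vtx_mem_CF (compat_τσ σ), by simp⟩
    · exact smul_CFs (by exact_mod_cast ht) σ
  rw [himg, latt_CFs, Set.ncard_coe_finset, LFC_card]

lemma ehr_PF (σ : Sig) (t : ℕ) :
    ehr (PF σ) t = ∑ h ∈ Finset.range (t + 1), (t - h + 1) ^ fc σ := by
  unfold ehr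
  have himg : (fun y => (t : ℝ) • y) '' PF σ = PFs σ (t : ℝ) := by
    rcases Nat.eq_zero_or_pos t with rfl | ht
    · push_cast
      rw [PFs_zero]
      ext x
      simp only [Set.mem_image, Set.mem_singleton_iff]
      constructor
      · rintro ⟨y, _, rfl⟩
        simp
      · rintro rfl
        exact ⟨apexPt, apex_mem_PF σ, by simp⟩
    · exact smul_PFs (by exact_mod_cast ht) σ
  rw [himg, latt_PFs, Set.ncard_coe_finset, LFP_card]

lemma ehr_apex (t : ℕ) : ehr ({apexPt} : Set (V 4)) t = 1 := by
  unfold ehr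
  have : {x | x ∈ (fun y => (t : ℝ) • y) '' {apexPt} ∧ IsLatticePoint x}
      = {(t : ℝ) • apexPt} := by
    ext x
    simp only [Set.image_singleton, Set.mem_setOf_eq, Set.mem_singleton_iff]
    constructor
    · rintro ⟨hx, _⟩
      exact hx
    · rintro rfl
      refine ⟨rfl, fun j => ?_⟩
      refine Fin.lastCases ?_ (fun i => ?_) j
      · exact ⟨t, by simp [apex_last]⟩
      · exact ⟨0, by simp [apex_castSucc]⟩
  rw [this, Set.ncard_singleton]


lemma pow_succ_sub_bounds {x : ℝ} (hx : 0 ≤ x) (f : ℕ) :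
    ((f:ℝ)+1) * x^f ≤ (x+1)^(f+1) - x^(f+1) ∧
    (x+1)^(f+1) - x^(f+1) ≤ ((f:ℝ)+1) * (x+1)^f := by
  have hx1 : (0:ℝ) ≤ x + 1 := by linarith
  have key : (x+1)^(f+1) - x^(f+1) = ∑ i ∈ Finset.range (f+1), (x+1)^i * x^(f-i) := by
    have h := geom_sum₂_mul (x+1) x (f+1)
    rw [add_sub_cancel_left, mul_one] at h
    rw [← h]
    apply Finset.sum_congr rfl
    intro i _
    congr 1
  constructor
  · rw [key]
    have : ((f:ℝ)+1) * x^f = ∑ _i ∈ Finset.range (f+1), x^f := by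
      rw [Finset.sum_const, Finset.card_range]
      push_cast
      ring
    rw [this]
    apply Finset.sum_le_sum
    intro i hi
    rw [Finset.mem_range, Nat.lt_succ_iff] at hi
    calc x^f = x^i * x^(f-i) := by rw [← pow_add, Nat.add_sub_cancel' hi]
      _ ≤ (x+1)^i * x^(f-i) := by
          apply mul_le_mul_of_nonneg_right _ (pow_nonneg hx _)
          exact pow_le_pow_left₀ hx (by linarith) i
  · rw [key]
    have : ((f:ℝ)+1) * (x+1)^f = ∑ _i ∈ Finset.range (f+1), (x+1)^f := by
      rw [Finset.sum_const, Finset.card_range]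
      push_cast
      ring
    rw [this]
    apply Finset.sum_le_sum
    intro i hi
    rw [Finset.mem_range, Nat.lt_succ_iff] at hi
    calc (x+1)^i * x^(f-i) ≤ (x+1)^i * (x+1)^(f-i) := by
          apply mul_le_mul_of_nonneg_left _ (pow_nonneg hx1 _)
          exact pow_le_pow_left₀ hx (by linarith) _
      _ = (x+1)^f := by rw [← pow_add, Nat.add_sub_cancel' hi]

/-- the real-valued power sum -/
def Sf (f t : ℕ) : ℝ := ∑ h ∈ Finset.range (t+1), ((h:ℝ)+1)^f

lemma Sf_lower (f t : ℕ) : ((t:ℝ)+1)^(f+1) ≤ ((f:ℝ)+1) * Sf f t := by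
  have htel : ∑ h ∈ Finset.range (t+1),
      ((((h:ℝ))+1)^(f+1) - ((h:ℝ))^(f+1)) = ((t:ℝ)+1)^(f+1) := by
    have := Finset.sum_range_sub (fun h : ℕ => ((h:ℝ))^(f+1)) (t+1)
    push_cast at this ⊢
    rw [this]
    norm_num
  rw [← htel, Sf, Finset.mul_sum]
  apply Finset.sum_le_sum
  intro h _
  exact (pow_succ_sub_bounds (by positivity : (0:ℝ) ≤ (h:ℝ)) f).2

lemma Sf_upper (f t : ℕ) : ((f:ℝ)+1) * Sf f t ≤ ((t:ℝ)+2)^(f+1) := by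
  have htel : ∑ h ∈ Finset.range (t+1),
      ((((h:ℝ))+2)^(f+1) - (((h:ℝ))+1)^(f+1)) = ((t:ℝ)+2)^(f+1) - 1 := by
    induction t with
    | zero => simp [Finset.sum_range_one]
    | succ n ih =>
        rw [Finset.sum_range_succ, ih]
        push_cast
        ring
  have hle : ((f:ℝ)+1) * Sf f t ≤ ((t:ℝ)+2)^(f+1) - 1 := by
    rw [← htel, Sf, Finset.mul_sum]
    apply Finset.sum_le_sum
    intro h _
    have := (pow_succ_sub_bounds (by positivity : (0:ℝ) ≤ (h:ℝ)+1) f).1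
    calc ((f:ℝ)+1) * ((h:ℝ)+1)^f ≤ ((h:ℝ)+1+1)^(f+1) - ((h:ℝ)+1)^(f+1) := this
      _ = ((h:ℝ)+2)^(f+1) - ((h:ℝ)+1)^(f+1) := by ring_nf
  linarith

lemma tendsto_ratio_pow (c : ℝ) (m : ℕ) :
    Tendsto (fun t : ℕ => (((t:ℝ)+c)/t)^m) atTop (𝓝 1) := by
  have h1 : Tendsto (fun t : ℕ => 1 + c/(t:ℝ)) atTop (𝓝 1) := by
    have := (tendsto_const_div_atTop_nhds_zero_nat c).const_add 1
    simpa using this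
  have h2 : Tendsto (fun t : ℕ => (1 + c/(t:ℝ))^m) atTop (𝓝 1) := by
    have := h1.pow m
    simpa using this
  apply h2.congr'
  filter_upwards [eventually_ge_atTop 1] with t ht
  have ht' : (t:ℝ) ≠ 0 := by
    have : (1:ℝ) ≤ (t:ℝ) := by exact_mod_cast ht
    linarith
  field_simp

lemma lvol_of_tendsto {F : Set (V 4)} {L : ℝ}
    (h : Tendsto (fun t : ℕ => ((pdim F).factorial * ehr F t : ℝ) / (t : ℝ) ^ (pdim F))
      atTop (𝓝 L)) : lvol F = L :=
  h.limUnder_eq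

lemma lvol_CF (σ : Sig) : lvol (CF σ) = (fc σ).factorial := by
  apply lvol_of_tendsto
  have hp : pdim (CF σ) = fc σ := pdim_CF σ
  rw [hp]
  set f := fc σ
  have : Tendsto (fun t : ℕ => (f.factorial : ℝ) * (((t:ℝ)+1)/t)^f) atTop
      (𝓝 ((f.factorial : ℝ) * 1)) := (tendsto_ratio_pow 1 f).const_mul _
  rw [mul_one] at this
  apply this.congr'
  filter_upwards [eventually_ge_atTop 1] with t ht
  have ht' : (0:ℝ) < (t:ℝ) := by exact_mod_cast ht
  rw [ehr_CF]
  push_cast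
  rw [div_pow]
  field_simp
  rfl

lemma ehr_PF' (σ : Sig) (t : ℕ) : (ehr (PF σ) t : ℝ) = Sf (fc σ) t := by
  rw [ehr_PF, Sf]
  have : ∑ h ∈ Finset.range (t+1), (t - h + 1) ^ fc σ
      = ∑ j ∈ Finset.range (t+1), (j + 1) ^ fc σ := by
    have := Finset.sum_range_reflect (fun j => (j + 1) ^ fc σ) (t+1)
    rw [← this]
    apply Finset.sum_congr rfl
    intro h hh
    rw [Finset.mem_range, Nat.lt_succ_iff] at hh
    congr 2
  rw [this]
  push_cast
  rfl

lemma lvol_PF (σ : Sig) : lvol (PF σ) = (fc σ).factorial := by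
  apply lvol_of_tendsto
  have hp : pdim (PF σ) = fc σ + 1 := pdim_PF σ
  rw [hp]
  set f := fc σ with hf
  have hglo : Tendsto (fun t : ℕ => (f.factorial : ℝ) * (((t:ℝ)+1)/t)^(f+1)) atTop
      (𝓝 ((f.factorial : ℝ) * 1)) := (tendsto_ratio_pow 1 (f+1)).const_mul _
  have hghi : Tendsto (fun t : ℕ => (f.factorial : ℝ) * (((t:ℝ)+2)/t)^(f+1)) atTop
      (𝓝 ((f.factorial : ℝ) * 1)) := (tendsto_ratio_pow 2 (f+1)).const_mul _
  rw [mul_one] at hglo hghi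
  apply tendsto_of_tendsto_of_tendsto_of_le_of_le' hglo hghi
  · filter_upwards [eventually_ge_atTop 1] with t ht
    have ht' : (0:ℝ) < (t:ℝ) := by exact_mod_cast ht
    have htp : (0:ℝ) < (t:ℝ)^(f+1) := by positivity
    have hSf : (ehr (PF σ) t : ℝ) = Sf f t := ehr_PF' σ t
    have hfa : (0:ℝ) ≤ (f.factorial : ℝ) := by positivity
    have hnum : (f.factorial : ℝ) * ((t:ℝ)+1)^(f+1) ≤ ((f+1).factorial : ℝ) * Sf f t := by
      rw [Nat.factorial_succ]
      push_cast
      nlinarith [mul_le_mul_of_nonneg_left (Sf_lower f t) hfa]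
    calc (f.factorial : ℝ) * (((t:ℝ)+1)/t)^(f+1)
        = (f.factorial : ℝ) * ((t:ℝ)+1)^(f+1) / (t:ℝ)^(f+1) := by
          rw [div_pow]; ring
      _ ≤ (((f+1).factorial : ℝ) * Sf f t) / (t:ℝ)^(f+1) := by gcongr
      _ = (((f+1).factorial : ℝ) * (ehr (PF σ) t : ℝ)) / (t:ℝ)^(f+1) := by rw [hSf]
      _ = ((f+1).factorial * ehr (PF σ) t : ℝ) / (t:ℝ)^(f+1) := by push_cast; ring
  · filter_upwards [eventually_ge_atTop 1] with t ht
    have ht' : (0:ℝ) < (t:ℝ) := by exact_mod_cast ht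
    have htp : (0:ℝ) < (t:ℝ)^(f+1) := by positivity
    have hSf : (ehr (PF σ) t : ℝ) = Sf f t := ehr_PF' σ t
    have hfa : (0:ℝ) ≤ (f.factorial : ℝ) := by positivity
    have hnum : ((f+1).factorial : ℝ) * Sf f t ≤ (f.factorial : ℝ) * ((t:ℝ)+2)^(f+1) := by
      rw [Nat.factorial_succ]
      push_cast
      nlinarith [mul_le_mul_of_nonneg_left (Sf_upper f t) hfa]
    calc ((f+1).factorial * ehr (PF σ) t : ℝ) / (t:ℝ)^(f+1)
        = (((f+1).factorial : ℝ) * Sf f t) / (t:ℝ)^(f+1) := by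
          push_cast
          rw [hSf]
      _ ≤ ((f.factorial : ℝ) * ((t:ℝ)+2)^(f+1)) / (t:ℝ)^(f+1) := by gcongr
      _ = (f.factorial : ℝ) * (((t:ℝ)+2)/t)^(f+1) := by
          rw [div_pow]; ring

lemma lvol_apex : lvol ({apexPt} : Set (V 4)) = 1 := by
  apply lvol_of_tendsto
  have hp : pdim ({apexPt} : Set (V 4)) = 0 := pdim_apex
  rw [hp]
  have : Tendsto (fun _ : ℕ => (1:ℝ)) atTop (𝓝 1) := tendsto_const_nhds
  apply this.congr
  intro t
  rw [ehr_apex]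
  norm_num


def wCf (σ : Sig) : Fin 3 → ℝ := fun i =>
  match σ i with
  | some b => cval b
  | none => 1/2

def wC (σ : Sig) : V 4 := Fin.snoc (wCf σ) 0

lemma wC_mem_CF (σ : Sig) : wC σ ∈ CF σ := by
  refine ⟨by simp [wC], fun i => ⟨fun b hb => ?_, fun hn => ?_⟩⟩
  · simp only [wC, Fin.snoc_castSucc, wCf, hb, one_mul]
  · simp only [wC, Fin.snoc_castSucc, wCf, hn, Set.mem_Icc]
    norm_num

lemma wC_mem_PF (σ : Sig) : wC σ ∈ PF σ := by
  refine ⟨by simp [wC], fun i => ⟨fun b hb => ?_, fun hn => ?_⟩⟩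
  · simp only [wC, Fin.snoc_castSucc, wCf, hb, Fin.snoc_last]
    ring
  · simp only [wC, Fin.snoc_castSucc, wCf, hn, Fin.snoc_last, Set.mem_Icc]
    norm_num

lemma cval_ne_half (b : Bool) : cval b ≠ 1/2 := by
  cases b <;> simp [cval] <;> norm_num

lemma sig_eq_of_wC (σ σ' : Sig)
    (h1 : ∀ i b, σ' i = some b → wCf σ i = cval b)
    (h2 : ∀ i b, σ i = some b → wCf σ' i = cval b) : σ = σ' := by
  funext i
  rcases hσ : σ i with _ | b <;> rcases hσ' : σ' i with _ | b'
  · rfl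
  · have := h1 i b' hσ'
    rw [wCf, hσ] at this
    exact absurd this.symm (cval_ne_half b')
  · have := h2 i b hσ
    rw [wCf, hσ'] at this
    exact absurd this.symm (cval_ne_half b)
  · have e1 := h1 i b' hσ'
    rw [wCf, hσ] at e1
    cases b <;> cases b' <;> first | rfl | simp [cval] at e1

lemma CF_injective : Function.Injective CF := by
  intro σ σ' h
  have m1 : wC σ ∈ CF σ' := h ▸ wC_mem_CF σ
  have m2 : wC σ' ∈ CF σ := h ▸ wC_mem_CF σ'
  apply sig_eq_of_wC
  · intro i b hb
    have := (m1.2 i).1 b hb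
    rw [wC, Fin.snoc_castSucc] at this
    rw [this, one_mul]
  · intro i b hb
    have := (m2.2 i).1 b hb
    rw [wC, Fin.snoc_castSucc] at this
    rw [this, one_mul]

lemma PF_injective : Function.Injective PF := by
  intro σ σ' h
  have m1 : wC σ ∈ PF σ' := h ▸ wC_mem_PF σ
  have m2 : wC σ' ∈ PF σ := h ▸ wC_mem_PF σ'
  apply sig_eq_of_wC
  · intro i b hb
    have := (m1.2 i).1 b hb
    rw [wC, Fin.snoc_castSucc, Fin.snoc_last] at this
    rw [this]; ring
  · intro i b hb
    have := (m2.2 i).1 b hb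
    rw [wC, Fin.snoc_castSucc, Fin.snoc_last] at this
    rw [this]; ring

lemma apex_not_mem_CF (σ : Sig) : apexPt ∉ CF σ := by
  intro h
  have := h.1
  rw [apex_last] at this
  norm_num at this

lemma CF_ne_PF (σ σ' : Sig) : CF σ ≠ PF σ' := by
  intro h
  exact apex_not_mem_CF σ (h ▸ apex_mem_PF σ')

lemma vtx_ne_apex (τ : Fin 3 → Bool) : vtx τ ≠ apexPt := by
  intro h
  have := congrFun h (Fin.last 3)
  rw [vtx_last, apex_last] at this
  norm_num at this

lemma CF_ne_apexSet (σ : Sig) : CF σ ≠ ({apexPt} : Set (V 4)) := by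
  intro h
  have : vtx (τσ σ) ∈ ({apexPt} : Set (V 4)) := h ▸ vtx_mem_CF (compat_τσ σ)
  exact vtx_ne_apex _ this

lemma PF_ne_apexSet (σ : Sig) : PF σ ≠ ({apexPt} : Set (V 4)) := by
  intro h
  have : vtx (τσ σ) ∈ ({apexPt} : Set (V 4)) := h ▸ vtx_mem_PF (compat_τσ σ)
  exact vtx_ne_apex _ this

noncomputable instance : DecidableEq (Set (V 4)) := Classical.decEq _

lemma pdim_CF2 (σ : Sig) : pdim (CF σ) = fc σ := pdim_CF σ
lemma pdim_PF2 (σ : Sig) : pdim (PF σ) = fc σ + 1 := pdim_PF σ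
lemma pdim_apex2 : pdim ({apexPt} : Set (V 4)) = 0 := pdim_apex

def Fks (k : ℕ) : Finset (Set (V 4)) :=
  ((Finset.univ.filter fun σ : Sig => fc σ = k).image CF ∪
   (Finset.univ.filter fun σ : Sig => fc σ + 1 = k).image PF) ∪
  (if k = 0 then {({apexPt} : Set (V 4))} else ∅)

lemma faces_eq (k : ℕ) :
    {F : Set (V 4) | IsFaceOf (pyrPt (unitCube 3) 0) F ∧ pdim F = k} = (Fks k : Set (Set (V 4))) := by
  ext F
  simp only [Set.mem_setOf_eq, Finset.mem_coe]
  constructor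
  · rintro ⟨⟨hne, ℓ, rfl⟩, hdim⟩
    rcases face_classify ℓ with h | h | h <;> rw [h] at hdim ⊢
    · rw [pdim_CF2] at hdim
      apply Finset.mem_union_left
      apply Finset.mem_union_left
      exact Finset.mem_image.2 ⟨sig ℓ, Finset.mem_filter.2 ⟨Finset.mem_univ _, hdim⟩, rfl⟩
    · rw [pdim_PF2] at hdim
      apply Finset.mem_union_left
      apply Finset.mem_union_right
      exact Finset.mem_image.2 ⟨sig ℓ, Finset.mem_filter.2 ⟨Finset.mem_univ _, hdim⟩, rfl⟩
    · rw [pdim_apex2] at hdim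
      apply Finset.mem_union_right
      rw [← hdim]
      simp
  · intro hF
    rw [Fks] at hF
    rcases Finset.mem_union.1 hF with hF | hF
    · rcases Finset.mem_union.1 hF with hF | hF
      · obtain ⟨σ, hσ, rfl⟩ := Finset.mem_image.1 hF
        obtain ⟨ℓ, hℓ⟩ := exists_ℓ_CF σ
        exact ⟨⟨CF_nonempty σ, ℓ, hℓ.symm⟩, by rw [pdim_CF2]; exact (Finset.mem_filter.1 hσ).2⟩
      · obtain ⟨σ, hσ, rfl⟩ := Finset.mem_image.1 hF
        obtain ⟨ℓ, hℓ⟩ := exists_ℓ_PF σ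
        exact ⟨⟨PF_nonempty σ, ℓ, hℓ.symm⟩, by rw [pdim_PF2]; exact (Finset.mem_filter.1 hσ).2⟩
    · rcases hk : k with _ | k'
      · rw [hk, if_pos rfl, Finset.mem_singleton] at hF
        subst hF
        obtain ⟨ℓ, hℓ⟩ := exists_ℓ_apex
        exact ⟨⟨⟨apexPt, rfl⟩, ℓ, hℓ.symm⟩, pdim_apex2⟩
      · rw [hk, if_neg (Nat.succ_ne_zero k')] at hF
        exact absurd hF (Finset.notMem_empty F)

lemma sum_lvol_Fks (k : ℕ) : (∑ F ∈ Fks k, lvol F) =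
    ((Finset.univ.filter fun σ : Sig => fc σ = k).card : ℝ) * k.factorial
    + ((Finset.univ.filter fun σ : Sig => fc σ + 1 = k).card : ℝ) * (k-1).factorial
    + (if k = 0 then 1 else 0) := by
  have hdisj1 : Disjoint ((Finset.univ.filter fun σ : Sig => fc σ = k).image CF)
      ((Finset.univ.filter fun σ : Sig => fc σ + 1 = k).image PF) := by
    rw [Finset.disjoint_left]
    intro A hA hA'
    obtain ⟨σ, _, rfl⟩ := Finset.mem_image.1 hA
    obtain ⟨σ', _, hq⟩ := Finset.mem_image.1 hA'
    exact CF_ne_PF σ σ' hq.symm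
  have hdisj2 : Disjoint (((Finset.univ.filter fun σ : Sig => fc σ = k).image CF ∪
      (Finset.univ.filter fun σ : Sig => fc σ + 1 = k).image PF))
      (if k = 0 then ({({apexPt} : Set (V 4))} : Finset (Set (V 4))) else ∅) := by
    rcases hk : k with _ | k'
    · rw [if_pos rfl, Finset.disjoint_right]
      intro A hA hA'
      rw [Finset.mem_singleton] at hA
      subst hA
      rcases Finset.mem_union.1 hA' with h | h
      · obtain ⟨σ, _, hq⟩ := Finset.mem_image.1 h
        exact CF_ne_apexSet σ hq
      · obtain ⟨σ, _, hq⟩ := Finset.mem_image.1 h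
        exact PF_ne_apexSet σ hq
    · rw [if_neg (Nat.succ_ne_zero k')]
      exact Finset.disjoint_empty_right _
  rw [Fks, Finset.sum_union hdisj2, Finset.sum_union hdisj1]
  have hs1 : ∑ F ∈ (Finset.univ.filter fun σ : Sig => fc σ = k).image CF, lvol F
      = ((Finset.univ.filter fun σ : Sig => fc σ = k).card : ℝ) * k.factorial := by
    rw [Finset.sum_image (fun x _ y _ h => CF_injective h)]
    rw [Finset.sum_congr rfl (fun σ hσ => by
      rw [lvol_CF, (Finset.mem_filter.1 hσ).2])]
    rw [Finset.sum_const, nsmul_eq_mul]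
  have hs2 : ∑ F ∈ (Finset.univ.filter fun σ : Sig => fc σ + 1 = k).image PF, lvol F
      = ((Finset.univ.filter fun σ : Sig => fc σ + 1 = k).card : ℝ) * (k-1).factorial := by
    rw [Finset.sum_image (fun x _ y _ h => PF_injective h)]
    rw [Finset.sum_congr rfl (fun σ hσ => by
      have : fc σ = k - 1 := by
        have := (Finset.mem_filter.1 hσ).2
        omega
      rw [lvol_PF, this])]
    rw [Finset.sum_const, nsmul_eq_mul]
  have hs3 : ∑ F ∈ (if k = 0 then ({({apexPt} : Set (V 4))} : Finset (Set (V 4))) else ∅), lvol F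
      = (if k = 0 then (1:ℝ) else 0) := by
    rcases hk : k with _ | k'
    · rw [if_pos rfl, if_pos rfl, Finset.sum_singleton, lvol_apex]
    · rw [if_neg (Nat.succ_ne_zero k'), if_neg (Nat.succ_ne_zero k'), Finset.sum_empty]
  rw [hs1, hs2, hs3]

lemma finsum_faces (k : ℕ) :
    (∑ᶠ F ∈ {F : Set (V 4) | IsFaceOf (pyrPt (unitCube 3) 0) F ∧ pdim F = k}, lvol F)
      = ∑ F ∈ Fks k, lvol F := by
  rw [faces_eq k, finsum_mem_coe_finset]

lemma fc_cnone : fc cnone = 3 := by decide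

lemma pdim_P : pdim (pyrPt (unitCube 3) 0) = 4 := by
  rw [P_eq_PF, pdim_PF2, fc_cnone]

lemma card_fc0 : (Finset.univ.filter fun σ : Sig => fc σ = 0).card = 8 := by decide
lemma card_fc1 : (Finset.univ.filter fun σ : Sig => fc σ = 1).card = 12 := by decide
lemma card_fc2 : (Finset.univ.filter fun σ : Sig => fc σ = 2).card = 6 := by decide
lemma card_fc3 : (Finset.univ.filter fun σ : Sig => fc σ = 3).card = 1 := by decide
lemma card_fc4 : (Finset.univ.filter fun σ : Sig => fc σ = 4).card = 0 := by decide

lemma card_fcp0 : (Finset.univ.filter fun σ : Sig => fc σ + 1 = 0).card = 0 := by decide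
lemma card_fcp1 : (Finset.univ.filter fun σ : Sig => fc σ + 1 = 1).card = 8 := by decide
lemma card_fcp2 : (Finset.univ.filter fun σ : Sig => fc σ + 1 = 2).card = 12 := by decide
lemma card_fcp3 : (Finset.univ.filter fun σ : Sig => fc σ + 1 = 3).card = 6 := by decide
lemma card_fcp4 : (Finset.univ.filter fun σ : Sig => fc σ + 1 = 4).card = 1 := by decide

lemma cInv_value : cInv (pyrPt (unitCube 3) 0) 1 = -1 := by
  rw [cInv, pdim_P]
  rw [show (4:ℕ) + 1 = 5 from rfl]
  rw [Finset.sum_range_succ, Finset.sum_range_succ, Finset.sum_range_succ,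
    Finset.sum_range_succ, Finset.sum_range_succ, Finset.sum_range_zero]
  rw [finsum_faces 0, finsum_faces 1, finsum_faces 2, finsum_faces 3, finsum_faces 4]
  rw [sum_lvol_Fks 0, sum_lvol_Fks 1, sum_lvol_Fks 2, sum_lvol_Fks 3, sum_lvol_Fks 4]
  rw [card_fc0, card_fc1, card_fc2, card_fc3, card_fc4,
    card_fcp0, card_fcp1, card_fcp2, card_fcp3, card_fcp4]
  norm_num [Nat.factorial]

end C1Aux

/-- For the lattice pyramid over the 3-dimensional unit cube, `c₁(pyr(C)) = -1`;
in particular `c₁` can be negative for lattice polytopes. -/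
theorem c1_pyr_cube :
    cInv (pyrPt (unitCube 3) 0) 1 = -1 ∧ cInv (pyrPt (unitCube 3) 0) 1 < 0 := by
  have h := C1Aux.cInv_value
  exact ⟨h, by rw [h]; norm_num⟩
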